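/- Let G be a simple undirected graph with source s and sink t, in which every vertex and edge lies on an s-t path. Let S be a feedback vertex set of G, and let T = S ∪ N(S) be S together with all neighbors of vertices in S. Then T is a tracking set for G. -/

import Mathlib

open SimpleGraph

noncomputable def trackSeq {V : Type} (T : Set V) (l : List V) : List V :=
  l.filter (fun v => @decide (v ∈ T) (Classical.propDecidable _))

/-- `T` is a tracking set for `s`-`t` paths in `G`: distinct `s`-`t` paths have
distinct sequences of `T`-vertices along them. -/
def IsTrackingSet {V : Type} (G : SimpleGraph V) (s t : V) (T : Set V) : Prop :=
  ∀ p q : G.Walk s t, p.IsPath → q.IsPath →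
    trackSeq T p.support = trackSeq T q.support → p = q

/-- Every vertex and every edge of `G` lies on some `s`-`t` path. -/
def Reduced {V : Type} (G : SimpleGraph V) (s t : V) : Prop :=
  (∀ v : V, ∃ p : G.Walk s t, p.IsPath ∧ v ∈ p.support) ∧
  (∀ e ∈ G.edgeSet, ∃ p : G.Walk s t, p.IsPath ∧ e ∈ p.edges)

/-- `S` is a feedback vertex set: every cycle of `G` meets `S`. -/
def IsFVS {V : Type} (G : SimpleGraph V) (S : Set V) : Prop :=
  ∀ (v : V) (c : G.Walk v v), c.IsCycle → ∃ x ∈ c.support, x ∈ S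

/-- The neighbourhood of a set of vertices. -/
def nbhd {V : Type} (G : SimpleGraph V) (S : Set V) : Set V :=
  {v | ∃ u ∈ S, G.Adj u v}

section helpers


variable {V : Type}

lemma mem_trackSeq {T : Set V} {l : List V} {v : V} :
    v ∈ trackSeq T l ↔ v ∈ l ∧ v ∈ T := by
  simp only [trackSeq, List.mem_filter, decide_eq_true_eq]

lemma trackSeq_append (T : Set V) (l1 l2 : List V) :
    trackSeq T (l1 ++ l2) = trackSeq T l1 ++ trackSeq T l2 :=
  List.filter_append _ _

lemma trackSeq_cons_of_mem {T : Set V} {a : V} (ha : a ∈ T) (l : List V) :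
    trackSeq T (a :: l) = a :: trackSeq T l := by
  simp only [trackSeq, List.filter_cons]
  rw [if_pos (by simpa using ha)]

lemma trackSeq_cons_of_not_mem {T : Set V} {a : V} (ha : a ∉ T) (l : List V) :
    trackSeq T (a :: l) = trackSeq T l := by
  simp only [trackSeq, List.filter_cons]
  rw [if_neg (by simpa using ha)]

lemma trackSeq_singleton_of_mem {T : Set V} {a : V} (ha : a ∈ T) :
    trackSeq T [a] = [a] := by
  rw [trackSeq_cons_of_mem ha]; rfl

lemma list_split_unique {α : Type} {v : α} :
    ∀ {l1 l2 r1 r2 : List α}, l1 ++ v :: r1 = l2 ++ v :: r2 → v ∉ l1 → v ∉ l2 →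
      l1 = l2 ∧ r1 = r2 := by
  intro l1
  induction l1 with
  | nil =>
    intro l2 r1 r2 h h1 h2
    cases l2 with
    | nil => simpa using h
    | cons b l2 =>
      simp only [List.nil_append, List.cons_append, List.cons.injEq] at h
      exact absurd (h.1 ▸ (List.mem_cons_self (a := b) (l := l2))) h2
  | cons a l1 ih =>
    intro l2 r1 r2 h h1 h2
    cases l2 with
    | nil =>
      simp only [List.nil_append, List.cons_append, List.cons.injEq] at h
      exact absurd (h.1.symm ▸ (List.mem_cons_self (a := a) (l := l1))) h1
    | cons b l2 =>
      simp only [List.cons_append, List.cons.injEq] at h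
      obtain ⟨rfl, h⟩ := h
      have := ih h (fun hm => h1 (List.mem_cons_of_mem _ hm))
        (fun hm => h2 (List.mem_cons_of_mem _ hm))
      exact ⟨by rw [this.1], this.2⟩

/-- The subgraph of `G` avoiding the set `S`. -/
def avoidG (G : SimpleGraph V) (S : Set V) : SimpleGraph V where
  Adj x y := G.Adj x y ∧ x ∉ S ∧ y ∉ S
  symm := by
    constructor
    intro x y h
    exact ⟨h.1.symm, h.2.2, h.2.1⟩
  loopless := by
    constructor
    intro x h
    exact G.loopless.irrefl x h.1

lemma avoidG_support_not_mem {G : SimpleGraph V} {S : Set V} :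
    ∀ {u v : V} (w : (avoidG G S).Walk u v), u ∉ S → ∀ x ∈ w.support, x ∉ S := by
  intro u v w
  induction w with
  | nil =>
    intro hu x hx
    rw [SimpleGraph.Walk.support_nil, List.mem_singleton] at hx
    exact hx ▸ hu
  | @cons a b c h w ih =>
    intro hu x hx
    rw [SimpleGraph.Walk.support_cons, List.mem_cons] at hx
    rcases hx with rfl | hx
    · exact hu
    · exact ih h.2.2 x hx

/-- the penultimate-vertex helper -/
lemma exists_penultimate {G : SimpleGraph V} :
    ∀ {a b : V} (w : G.Walk a b), ¬w.Nil →
      ∃ c, G.Adj c b ∧ (c ∈ w.support.tail ∨ (c = a ∧ w.length = 1)) := by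
  intro a b w
  induction w with
  | nil => intro h; exact absurd SimpleGraph.Walk.nil_nil h
  | @cons a a' b h w ih =>
    intro _
    cases w with
    | nil => exact ⟨a, h, Or.inr ⟨rfl, rfl⟩⟩
    | @cons x y z h' w' =>
      obtain ⟨c, hc, hmem⟩ := ih (by simp)
      refine ⟨c, hc, Or.inl ?_⟩
      rw [SimpleGraph.Walk.support_cons, List.tail_cons]
      rcases hmem with hm | ⟨rfl, _⟩
      · exact List.mem_of_mem_tail hm
      · exact SimpleGraph.Walk.start_mem_support _

end helpers

open SimpleGraph Walk in

lemma key_lemma {V : Type} (G : SimpleGraph V) (S : Set V) (hS : IsFVS G S) :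
    ∀ (n : ℕ) (s t : V) (p q : G.Walk s t), p.IsPath → q.IsPath →
      p.length + q.length ≤ n →
      trackSeq (S ∪ nbhd G S) p.support = trackSeq (S ∪ nbhd G S) q.support → p = q := by
  intro n
  induction n using Nat.strong_induction_on with
  | _ n ih =>
  intro s t p q hp hq hlen hσ
  classical
  by_contra hne
  set T := S ∪ nbhd G S with hT
  by_cases hA : ∃ v, v ∈ T ∧ v ∈ p.support ∧ v ≠ s ∧ v ≠ t
  · -- Case A: split both paths at an interior tracker
    obtain ⟨v, hvT, hvp, hvs, hvt⟩ := hA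
    have hvq : v ∈ q.support := by
      have hv : v ∈ trackSeq T q.support := hσ ▸ mem_trackSeq.2 ⟨hvp, hvT⟩
      exact (mem_trackSeq.1 hv).1
    -- p-side decomposition
    have hsuppP : p.support =
        (p.takeUntil v hvp).support ++ (p.dropUntil v hvp).support.tail := by
      conv_lhs => rw [← p.take_spec hvp]
      exact Walk.support_append _ _
    have hneP : (p.takeUntil v hvp).support ≠ [] := Walk.support_ne_nil _
    have hlastP : (p.takeUntil v hvp).support.getLast hneP = v :=
      Walk.getLast_support _
    have hdecP : (p.takeUntil v hvp).support =
        (p.takeUntil v hvp).support.dropLast ++ [v] := by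
      conv_lhs => rw [← List.dropLast_append_getLast hneP]
      rw [hlastP]
    have hvndP : v ∉ (p.takeUntil v hvp).support.dropLast := by
      have h2 := p.count_support_takeUntil_eq_one hvp
      rw [hdecP, List.count_append] at h2
      have h3 : List.count v [v] = 1 := by simp
      exact List.count_eq_zero.1 (by omega)
    have hvntP : v ∉ (p.dropUntil v hvp).support.tail := by
      have hnd : ((p.takeUntil v hvp).support ++
          (p.dropUntil v hvp).support.tail).Nodup := hsuppP ▸ hp.support_nodup
      rw [List.nodup_append] at hnd
      exact fun hmem => hnd.2.2 _ (Walk.end_mem_support _) _ hmem rfl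
    have hσP : trackSeq T p.support =
        trackSeq T (p.takeUntil v hvp).support.dropLast ++
          v :: trackSeq T (p.dropUntil v hvp).support.tail := by
      conv_lhs => rw [hsuppP, trackSeq_append, hdecP, trackSeq_append,
        trackSeq_singleton_of_mem hvT]
      rw [List.append_assoc, List.singleton_append]
    -- q-side decomposition
    have hsuppQ : q.support =
        (q.takeUntil v hvq).support ++ (q.dropUntil v hvq).support.tail := by
      conv_lhs => rw [← q.take_spec hvq]
      exact Walk.support_append _ _
    have hneQ : (q.takeUntil v hvq).support ≠ [] := Walk.support_ne_nil _
    have hlastQ : (q.takeUntil v hvq).support.getLast hneQ = v :=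
      Walk.getLast_support _
    have hdecQ : (q.takeUntil v hvq).support =
        (q.takeUntil v hvq).support.dropLast ++ [v] := by
      conv_lhs => rw [← List.dropLast_append_getLast hneQ]
      rw [hlastQ]
    have hvndQ : v ∉ (q.takeUntil v hvq).support.dropLast := by
      have h2 := q.count_support_takeUntil_eq_one hvq
      rw [hdecQ, List.count_append] at h2
      have h3 : List.count v [v] = 1 := by simp
      exact List.count_eq_zero.1 (by omega)
    have hvntQ : v ∉ (q.dropUntil v hvq).support.tail := by
      have hnd : ((q.takeUntil v hvq).support ++
          (q.dropUntil v hvq).support.tail).Nodup := hsuppQ ▸ hq.support_nodup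
      rw [List.nodup_append] at hnd
      exact fun hmem => hnd.2.2 _ (Walk.end_mem_support _) _ hmem rfl
    have hσQ : trackSeq T q.support =
        trackSeq T (q.takeUntil v hvq).support.dropLast ++
          v :: trackSeq T (q.dropUntil v hvq).support.tail := by
      conv_lhs => rw [hsuppQ, trackSeq_append, hdecQ, trackSeq_append,
        trackSeq_singleton_of_mem hvT]
      rw [List.append_assoc, List.singleton_append]
    have hkey := hσ
    rw [hσP, hσQ] at hkey
    obtain ⟨hα, hβ⟩ := list_split_unique hkey
      (fun h => hvndP (mem_trackSeq.1 h).1) (fun h => hvndQ (mem_trackSeq.1 h).1)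
    have hTake : trackSeq T (p.takeUntil v hvp).support =
        trackSeq T (q.takeUntil v hvq).support := by
      conv_lhs => rw [hdecP, trackSeq_append]
      conv_rhs => rw [hdecQ, trackSeq_append]
      rw [hα]
    have hDrop : trackSeq T (p.dropUntil v hvp).support =
        trackSeq T (q.dropUntil v hvq).support := by
      conv_lhs => rw [Walk.support_eq_cons (p.dropUntil v hvp),
        trackSeq_cons_of_mem hvT]
      conv_rhs => rw [Walk.support_eq_cons (q.dropUntil v hvq),
        trackSeq_cons_of_mem hvT]
      rw [hβ]
    -- lengths
    have hlenP : (p.takeUntil v hvp).length + (p.dropUntil v hvp).length = p.length := by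
      conv_rhs => rw [← p.take_spec hvp]
      rw [Walk.length_append]
    have hlenQ : (q.takeUntil v hvq).length + (q.dropUntil v hvq).length = q.length := by
      conv_rhs => rw [← q.take_spec hvq]
      rw [Walk.length_append]
    have h1P : 1 ≤ (p.takeUntil v hvp).length :=
      Nat.one_le_iff_ne_zero.2 fun h0 => hvs (Walk.eq_of_length_eq_zero h0).symm
    have h2P : 1 ≤ (p.dropUntil v hvp).length :=
      Nat.one_le_iff_ne_zero.2 fun h0 => hvt (Walk.eq_of_length_eq_zero h0)
    have h1Q : 1 ≤ (q.takeUntil v hvq).length :=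
      Nat.one_le_iff_ne_zero.2 fun h0 => hvs (Walk.eq_of_length_eq_zero h0).symm
    have h2Q : 1 ≤ (q.dropUntil v hvq).length :=
      Nat.one_le_iff_ne_zero.2 fun h0 => hvt (Walk.eq_of_length_eq_zero h0)
    have hlt1 : (p.takeUntil v hvp).length + (q.takeUntil v hvq).length < n := by omega
    have hlt2 : (p.dropUntil v hvp).length + (q.dropUntil v hvq).length < n := by omega
    have e1 : p.takeUntil v hvp = q.takeUntil v hvq :=
      ih ((p.takeUntil v hvp).length + (q.takeUntil v hvq).length) hlt1
        s v _ _ (hp.takeUntil hvp) (hq.takeUntil hvq) le_rfl hTake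
    have e2 : p.dropUntil v hvp = q.dropUntil v hvq :=
      ih ((p.dropUntil v hvp).length + (q.dropUntil v hvq).length) hlt2
        v t _ _ (hp.dropUntil hvp) (hq.dropUntil hvq) le_rfl hDrop
    exact hne (by rw [← p.take_spec hvp, ← q.take_spec hvq, e1, e2])
  · -- Case B
    push_neg at hA
    have hAq : ∀ v, v ∈ T → v ∈ q.support → v ≠ s → v = t := by
      intro v hvT hvq hvs
      have hv : v ∈ trackSeq T p.support := hσ ▸ mem_trackSeq.2 ⟨hvq, hvT⟩
      exact hA v hvT (mem_trackSeq.1 hv).1 hvs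
    cases p with
    | nil => exact hne (SimpleGraph.Walk.isPath_iff_eq_nil.1 hq).symm
    | @cons _ u1 _ e1 p1 =>
      cases q with
      | nil => exact absurd (SimpleGraph.Walk.isPath_iff_eq_nil.1 hp) (by simp)
      | @cons _ u2 _ e2 q1 =>
        by_cases huv : u1 = u2
        · subst huv
          have htail : trackSeq T p1.support = trackSeq T q1.support := by
            have h := hσ
            rw [Walk.support_cons, Walk.support_cons] at h
            by_cases hsT : s ∈ T
            · rw [trackSeq_cons_of_mem hsT, trackSeq_cons_of_mem hsT] at h
              exact (List.cons_eq_cons.1 h).2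
            · rwa [trackSeq_cons_of_not_mem hsT, trackSeq_cons_of_not_mem hsT] at h
          rw [Walk.length_cons, Walk.length_cons] at hlen
          have hlt : p1.length + q1.length < n := by omega
          have heq : p1 = q1 :=
            ih (p1.length + q1.length) hlt u1 t p1 q1
              hp.of_cons hq.of_cons le_rfl htail
          exact hne (by rw [heq])
        · -- endgame: no trackers except s,t; u1 ≠ u2
          have hsS : s ∉ S := by
            intro hsS
            have h1 : u1 = t := by
              refine hA u1 (Or.inr ⟨s, hsS, e1⟩) ?_ (fun h => G.ne_of_adj e1 h.symm)
              rw [Walk.support_cons]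
              exact List.mem_cons_of_mem _ (Walk.start_mem_support p1)
            have h2 : u2 = t := by
              refine hAq u2 (Or.inr ⟨s, hsS, e2⟩) ?_ (fun h => G.ne_of_adj e2 h.symm)
              rw [Walk.support_cons]
              exact List.mem_cons_of_mem _ (Walk.start_mem_support q1)
            exact huv (h1.trans h2.symm)
          have htS : t ∉ S := by
            intro htS
            have hplen1 : ∀ (u' : V) (e' : G.Adj s u') (p' : G.Walk u' t),
                (Walk.cons e' p').IsPath →
                (∀ v, v ∈ T → v ∈ (Walk.cons e' p').support → v ≠ s → v = t) →
                u' = t := by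
              intro u' e' p' hp' hA'
              obtain ⟨c, hca, hcm⟩ := exists_penultimate (Walk.cons e' p')
                (by simp)
              rcases hcm with hm | ⟨rfl, hlen1⟩
              · rw [Walk.support_cons, List.tail_cons] at hm
                have hcT : c ∈ T := Or.inr ⟨t, htS, hca.symm⟩
                have hcs : c ≠ s := by
                  rintro rfl
                  rw [Walk.cons_isPath_iff] at hp'
                  exact hp'.2 hm
                have hct := hA' c hcT
                  (by rw [Walk.support_cons]; exact List.mem_cons_of_mem _ hm) hcs
                exact absurd hct (G.ne_of_adj hca)
              · rw [Walk.length_cons] at hlen1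
                exact Walk.eq_of_length_eq_zero (p := p') (by omega)
            have h1 := hplen1 u1 e1 p1 hp hA
            have h2 := hplen1 u2 e2 q1 hq hAq
            exact huv (h1.trans h2.symm)
          have hnoSp : ∀ x ∈ (Walk.cons e1 p1).support, x ∉ S := by
            intro x hx hxS
            rcases eq_or_ne x s with rfl | hxs
            · exact hsS hxS
            · exact htS ((hA x (Or.inl hxS) hx hxs) ▸ hxS)
          have hnoSq : ∀ x ∈ (Walk.cons e2 q1).support, x ∉ S := by
            intro x hx hxS
            rcases eq_or_ne x s with rfl | hxs
            · exact hsS hxS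
            · exact htS ((hAq x (Or.inl hxS) hx hxs) ▸ hxS)
          have hpe : ∀ e ∈ (Walk.cons e1 p1).edges, e ∈ (avoidG G S).edgeSet := by
            intro e
            induction e using Sym2.ind with
            | _ a b =>
              intro he
              rw [SimpleGraph.mem_edgeSet]
              exact ⟨(Walk.cons e1 p1).adj_of_mem_edges he,
                hnoSp a (Walk.fst_mem_support_of_mem_edges _ he),
                hnoSp b (Walk.snd_mem_support_of_mem_edges _ he)⟩
          have hqe : ∀ e ∈ (Walk.cons e2 q1).edges, e ∈ (avoidG G S).edgeSet := by
            intro e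
            induction e using Sym2.ind with
            | _ a b =>
              intro he
              rw [SimpleGraph.mem_edgeSet]
              exact ⟨(Walk.cons e2 q1).adj_of_mem_edges he,
                hnoSq a (Walk.fst_mem_support_of_mem_edges _ he),
                hnoSq b (Walk.snd_mem_support_of_mem_edges _ he)⟩
          have hp' := hp.transfer hpe
          have hq' := hq.transfer hqe
          have hne' : (Walk.cons e1 p1).transfer (avoidG G S) hpe ≠
              (Walk.cons e2 q1).transfer (avoidG G S) hqe := by
            intro h
            have hsup := congrArg Walk.support h
            rw [Walk.support_transfer, Walk.support_transfer,
              Walk.support_cons, Walk.support_cons,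
              Walk.support_eq_cons p1, Walk.support_eq_cons q1] at hsup
            simp only [List.cons.injEq] at hsup
            exact huv hsup.2.1
          have hnac : ¬ (avoidG G S).IsAcyclic := by
            intro hac
            have := hac.path_unique ⟨_, hp'⟩ ⟨_, hq'⟩
            rw [Subtype.mk.injEq] at this
            exact hne' this
          unfold SimpleGraph.IsAcyclic at hnac
          push_neg at hnac
          obtain ⟨v, c, hc⟩ := hnac
          have hle : (avoidG G S) ≤ G := by intro a b h; exact h.1
          have hce : ∀ e ∈ c.edges, e ∈ G.edgeSet :=
            fun e he => SimpleGraph.edgeSet_mono hle (c.edges_subset_edgeSet he)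
          obtain ⟨x, hxc, hxS⟩ := hS v (c.transfer G hce) (hc.transfer hce)
          rw [Walk.support_transfer] at hxc
          have hvS : v ∉ S := by
            cases c with
            | nil => exact absurd hc Walk.IsCycle.not_of_nil
            | cons h c' => exact h.2.1
          exact (avoidG_support_not_mem c hvS x hxc) hxS

theorem stmt8 {V : Type} [Fintype V] (G : SimpleGraph V) (s t : V)
    (hred : Reduced G s t) (S : Set V) (hS : IsFVS G S) :
    IsTrackingSet G s t (S ∪ nbhd G S) := by
  intro p q hp hq hσ
  exact key_lemma G S hS (p.length + q.length) s t p q hp hq le_rfl hσ
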